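/- arXiv:0909.4884 — 2 statements merged into one kernel-verified Lean document; each statement's English description precedes it below -/
import Mathlib

section
/- Let γ = x_1 + i·x_2. For every d ≥ 1, the polynomials Re(γ^d) and Im(γ^d) are harmonic: Lap[Re(γ^d), h] = 0 and Lap[Im(γ^d), h] = 0, where Lap is the noncommutative Laplacian in the two variables x_1, x_2. -/
noncomputable section

/-- Variables: `some i` is `xᵢ`, `none` is the direction variable `h`. -/
abbrev Var (g : ℕ) := Option (Fin g)

/-- Noncommutative polynomials `ℝ⟨x₁,…,x_g,h⟩`. -/
abbrev NC (g : ℕ) := MonoidAlgebra ℝ (FreeMonoid (Var g))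

/-- The monomial corresponding to a word. -/
def mono (g : ℕ) (w : List (Var g)) : NC g :=
  MonoidAlgebra.of ℝ (FreeMonoid (Var g)) (FreeMonoid.ofList w)

/-- The generator `xᵢ`. -/
def Xv (g : ℕ) (i : Fin g) : NC g := mono g [some i]

/-- The direction variable `h`. -/
def Hv (g : ℕ) : NC g := mono g [none]

/-- Directional derivative of a word in `xᵢ` in direction `h`: sum of the
terms obtained by replacing one occurrence of `xᵢ` by `h`. -/
def wordD (g : ℕ) (i : Fin g) : List (Var g) → NC g
  | [] => 0
  | a :: w =>
      (if a = some i then mono g (none :: w) else 0) + mono g [a] * wordD g i w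

/-- Directional derivative `D[p, xᵢ, h]`, extended linearly from words. -/
def D (g : ℕ) (i : Fin g) (p : NC g) : NC g :=
  Finsupp.sum p.coeff fun w c => c • wordD g i (FreeMonoid.toList w)

/-- The noncommutative Laplacian `Lap[p,h] := ∑ᵢ D[D[p,xᵢ,h],xᵢ,h]`. -/
def Lap (g : ℕ) (p : NC g) : NC g := ∑ i : Fin g, D g i (D g i p)

/-- The transpose: linear anti-automorphism reversing words and fixing generators. -/
def transp (g : ℕ) (p : NC g) : NC g :=
  MonoidAlgebra.ofCoeff (Finsupp.mapDomain (fun w => FreeMonoid.ofList (FreeMonoid.toList w).reverse) p.coeff)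

/-- Evaluation of a polynomial at a tuple of matrices (one for each variable). -/
def eval (g n : ℕ) (M : Var g → Matrix (Fin n) (Fin n) ℝ) (p : NC g) :
    Matrix (Fin n) (Fin n) ℝ :=
  Finsupp.sum p.coeff fun w c => c • ((FreeMonoid.toList w).map M).prod

/-- `p` is a polynomial in `x₁,…,x_g` only (the variable `h` does not occur). -/
def NoH (g : ℕ) (p : NC g) : Prop :=
  ∀ w ∈ p.coeff.support, none ∉ FreeMonoid.toList w

/-- `p` is a homogeneous polynomial of degree `d` in the variables `x₁,…,x_g`. -/
def HomogX (g : ℕ) (d : ℕ) (p : NC g) : Prop :=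
  ∀ w ∈ p.coeff.support, none ∉ FreeMonoid.toList w ∧ (FreeMonoid.toList w).length = d


/-- Complex noncommutative polynomials `ℂ⟨x₁,x₂,h⟩`. -/
abbrev NCC := MonoidAlgebra ℂ (FreeMonoid (Var 2))

def XC (i : Fin 2) : NCC := MonoidAlgebra.of ℂ (FreeMonoid (Var 2)) (FreeMonoid.ofList [some i])

/-- `γ = x₁ + i x₂`. -/
def gam : NCC := XC 0 + Complex.I • XC 1

/-- Coefficientwise real part. -/
def rePart (p : NCC) : NC 2 := MonoidAlgebra.ofCoeff (Finsupp.mapRange Complex.re Complex.zero_re p.coeff)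

/-- Coefficientwise imaginary part. -/
def imPart (p : NCC) : NC 2 := MonoidAlgebra.ofCoeff (Finsupp.mapRange Complex.im Complex.zero_im p.coeff)

/-- Complex-linear transpose, reversing monomials. -/
def transpC (p : NCC) : NCC :=
  MonoidAlgebra.ofCoeff (Finsupp.mapDomain (fun w => FreeMonoid.ofList (FreeMonoid.toList w).reverse) p.coeff)

def monoC (w : List (Var 2)) : NCC :=
  MonoidAlgebra.of ℂ (FreeMonoid (Var 2)) (FreeMonoid.ofList w)

def wordDC (i : Fin 2) : List (Var 2) → NCC
  | [] => 0
  | a :: w =>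
      (if a = some i then monoC (none :: w) else 0) + monoC [a] * wordDC i w

def DC (i : Fin 2) (p : NCC) : NCC :=
  Finsupp.sum p.coeff fun w c => c • wordDC i (FreeMonoid.toList w)

lemma DC_add (i : Fin 2) (p q : NCC) : DC i (p + q) = DC i p + DC i q := by
  unfold DC
  rw [MonoidAlgebra.coeff_add]
  apply Finsupp.sum_add_index' <;> intros <;> simp [add_smul]

lemma DC_smul (i : Fin 2) (c : ℂ) (p : NCC) : DC i (c • p) = c • DC i p := by
  unfold DC
  rw [MonoidAlgebra.coeff_smul, Finsupp.sum_smul_index (fun w => by simp), Finsupp.smul_sum]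
  simp [smul_smul]

lemma DC_single (i : Fin 2) (w : FreeMonoid (Var 2)) (c : ℂ) :
    DC i (MonoidAlgebra.single w c) = c • wordDC i (FreeMonoid.toList w) := by
  unfold DC
  rw [MonoidAlgebra.coeff_single, Finsupp.sum_single_index (by simp)]

lemma DC_zero (i : Fin 2) : DC i 0 = 0 := by
  unfold DC; rw [MonoidAlgebra.coeff_zero]; exact Finsupp.sum_zero_index

lemma monoC_append (u v : List (Var 2)) : monoC (u ++ v) = monoC u * monoC v := by
  unfold monoC; rw [FreeMonoid.ofList_append, map_mul]

lemma monoC_nil : monoC [] = 1 := rfl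

lemma wordDC_append (i : Fin 2) (u v : List (Var 2)) :
    wordDC i (u ++ v) = wordDC i u * monoC v + monoC u * wordDC i v := by
  induction u with
  | nil => simp [wordDC, monoC_nil]
  | cons a u ih =>
    have key : monoC (none :: (u ++ v)) = monoC (none :: u) * monoC v := by
      rw [show (none : Var 2) :: (u ++ v) = (none :: u) ++ v from rfl, monoC_append]
    have key2 : monoC (a :: u) = monoC [a] * monoC u := by
      rw [show (a :: u : List (Var 2)) = [a] ++ u from rfl, monoC_append]
    simp only [List.cons_append, List.append_eq, wordDC, key2]
    by_cases h : a = some i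
    · rw [if_pos h, if_pos h, key, ih]
      simp [mul_add, add_mul, mul_assoc, add_assoc]
    · rw [if_neg h, if_neg h, ih]
      simp [mul_add, add_mul, mul_assoc, add_assoc]

def HC : NCC := monoC [none]

lemma monoC_eq_single (w : List (Var 2)) :
    monoC w = MonoidAlgebra.single (FreeMonoid.ofList w) 1 := rfl

lemma monoC_eq_single' (w : List (Var 2)) :
    monoC w = MonoidAlgebra.single (FreeMonoid.ofList w) 1 := rfl

lemma DC_single' (i : Fin 2) (w : FreeMonoid (Var 2)) (c : ℂ) :
    DC i (MonoidAlgebra.single w c) = c • wordDC i (FreeMonoid.toList w) :=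
  DC_single i w c

lemma DC_monoC_mul (i : Fin 2) (u : FreeMonoid (Var 2)) (v : FreeMonoid (Var 2)) :
    DC i ((MonoidAlgebra.single u (1:ℂ) : NCC) * (MonoidAlgebra.single v (1:ℂ) : NCC)) =
      DC i (MonoidAlgebra.single u (1:ℂ) : NCC) * (MonoidAlgebra.single v (1:ℂ) : NCC) +
        (MonoidAlgebra.single u (1:ℂ) : NCC) * DC i (MonoidAlgebra.single v (1:ℂ) : NCC) := by
  rw [MonoidAlgebra.single_mul_single, DC_single', DC_single', DC_single']
  have : FreeMonoid.toList (u * v) = FreeMonoid.toList u ++ FreeMonoid.toList v :=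
    FreeMonoid.toList_mul u v
  rw [this, wordDC_append]
  have hu : (MonoidAlgebra.single u (1:ℂ) : NCC) = monoC (FreeMonoid.toList u) := by
    rw [monoC_eq_single', FreeMonoid.ofList_toList]
  have hv : (MonoidAlgebra.single v (1:ℂ) : NCC) = monoC (FreeMonoid.toList v) := by
    rw [monoC_eq_single', FreeMonoid.ofList_toList]
  rw [hu, hv]
  simp

lemma DC_mul (i : Fin 2) (p q : NCC) : DC i (p * q) = DC i p * q + p * DC i q := by
  induction p using MonoidAlgebra.induction_on with
  | of u =>
    induction q using MonoidAlgebra.induction_on with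
    | of v => exact DC_monoC_mul i u v
    | add q q' hq hq' =>
      simp only [mul_add, add_mul, DC_add, hq, hq']; abel
    | smul r q hq =>
      simp only [mul_smul_comm, smul_mul_assoc, DC_smul, hq, smul_add]
  | add p p' hp hp' =>
    simp only [mul_add, add_mul, DC_add, hp, hp']; abel
  | smul r p hp =>
    simp only [mul_smul_comm, smul_mul_assoc, DC_smul, hp, smul_add]

lemma DC_HC (i : Fin 2) : DC i HC = 0 := by
  rw [HC, monoC_eq_single, DC_single]
  simp [wordDC, FreeMonoid.toList_ofList]

lemma DC_one (i : Fin 2) : DC i 1 = 0 := by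
  rw [show (1 : NCC) = MonoidAlgebra.single 1 1 from rfl, DC_single]
  simp [wordDC, FreeMonoid.toList_one]

lemma DC_XC (i j : Fin 2) : DC i (XC j) = if j = i then HC else 0 := by
  rw [show XC j = MonoidAlgebra.single (FreeMonoid.ofList [some j]) 1 from rfl, DC_single]
  simp only [FreeMonoid.toList_ofList, wordDC, HC, monoC_eq_single]
  by_cases h : j = i <;> simp [h, wordDC]

lemma DC_gam_zero : DC 0 gam = HC := by
  rw [gam, DC_add, DC_smul, DC_XC, DC_XC]; simp

lemma DC_gam_one : DC 1 gam = Complex.I • HC := by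
  rw [gam, DC_add, DC_smul, DC_XC, DC_XC]; simp

/-- `p` has "Cauchy–Riemann" relation. -/
def Good (p : NCC) : Prop := DC 1 p = Complex.I • DC 0 p

lemma good_add {p q : NCC} (hp : Good p) (hq : Good q) : Good (p + q) := by
  unfold Good at *; rw [DC_add, DC_add, hp, hq, smul_add]

lemma good_mul {p q : NCC} (hp : Good p) (hq : Good q) : Good (p * q) := by
  unfold Good at *
  rw [DC_mul, DC_mul, hp, hq, smul_add, smul_mul_assoc, mul_smul_comm]

lemma good_gam : Good gam := by unfold Good; rw [DC_gam_zero, DC_gam_one]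

lemma good_HC : Good HC := by unfold Good; rw [DC_HC, DC_HC, smul_zero]

lemma good_one : Good 1 := by unfold Good; rw [DC_one, DC_one, smul_zero]

lemma good_pow (n : ℕ) : Good (gam ^ n) := by
  induction n with
  | zero => simpa using good_one
  | succ n ih => rw [pow_succ]; exact good_mul ih good_gam

lemma good_D0_pow (n : ℕ) : Good (DC 0 (gam ^ n)) := by
  induction n with
  | zero =>
    have h1 : DC 0 ((gam : NCC) ^ 0) = 0 := by rw [pow_zero]; exact DC_one 0
    unfold Good; rw [h1, DC_zero, DC_zero, smul_zero]
  | succ n ih =>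
    rw [pow_succ', DC_mul, DC_gam_zero]
    exact good_add (good_mul good_HC (good_pow n)) (good_mul good_gam ih)

lemma lapC_pow (d : ℕ) :
    DC 0 (DC 0 (gam ^ d)) + DC 1 (DC 1 (gam ^ d)) = 0 := by
  rw [good_pow d, DC_smul, good_D0_pow d, smul_smul, Complex.I_mul_I]
  simp

lemma comm_aux (x : ℝ) (y : FreeMonoid (Var 2)) :
    Commute ((MonoidAlgebra.singleOneRingHom.comp Complex.ofRealHom) x)
      (MonoidAlgebra.of ℂ (FreeMonoid (Var 2)) y) := by
  show _ * _ = _ * _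
  simp only [RingHom.comp_apply, MonoidAlgebra.singleOneRingHom_apply,
    AddMonoidHom.toFun_eq_coe, MonoidAlgebra.singleAddHom_apply,
    MonoidAlgebra.of_apply, MonoidAlgebra.single_mul_single, one_mul, mul_one]

/-- Coefficient extension `ℝ⟨x⟩ →+* ℂ⟨x⟩`. -/
def cplx : NC 2 →+* NCC :=
  MonoidAlgebra.liftNCRingHom (MonoidAlgebra.singleOneRingHom.comp Complex.ofRealHom)
    (MonoidAlgebra.of ℂ (FreeMonoid (Var 2))) comm_aux

lemma cplx_single (w : FreeMonoid (Var 2)) (c : ℝ) :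
    cplx (MonoidAlgebra.single w c) = MonoidAlgebra.single w (c : ℂ) := by
  show MonoidAlgebra.liftNC _ _ _ = _
  rw [MonoidAlgebra.liftNC_single]
  simp only [AddMonoidHom.coe_coe, RingHom.comp_apply, MonoidAlgebra.singleOneRingHom_apply,
    AddMonoidHom.toFun_eq_coe, MonoidAlgebra.singleAddHom_apply,
    MonoidAlgebra.of_apply, MonoidAlgebra.single_mul_single, one_mul, mul_one,
    Complex.ofRealHom_eq_coe]

lemma cplx_mono (w : List (Var 2)) : cplx (mono 2 w) = monoC w := by
  rw [show mono 2 w = MonoidAlgebra.single (FreeMonoid.ofList w) (1:ℝ) from rfl, cplx_single]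
  rfl

lemma single_one_mul (r : ℂ) (f : NCC) : MonoidAlgebra.single 1 r * f = r • f := by
  ext x
  rw [MonoidAlgebra.coeff_single_one_mul]
  rfl

lemma cplx_smul (r : ℝ) (p : NC 2) : cplx (r • p) = (r : ℂ) • cplx p := by
  have := MonoidAlgebra.liftNC_smul (MonoidAlgebra.singleOneRingHom.comp Complex.ofRealHom)
    (MonoidAlgebra.of ℂ (FreeMonoid (Var 2))) r p
  show MonoidAlgebra.liftNC _ _ _ = _
  rw [this]
  simp only [RingHom.comp_apply, MonoidAlgebra.singleOneRingHom_apply]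
  rw [show (Complex.ofRealHom r) = (r:ℂ) from rfl]
  exact single_one_mul _ _

lemma wordDC_eq_cplx (i : Fin 2) (w : List (Var 2)) : wordDC i w = cplx (wordD 2 i w) := by
  induction w with
  | nil => simp [wordDC, wordD]
  | cons a w ih =>
    simp only [wordDC, wordD, map_add, map_mul, cplx_mono, ih, apply_ite cplx, map_zero]

lemma part_smul_cplx (φ : ℂ →+ ℝ) (hφ : ∀ (c : ℂ) (r : ℝ), φ (c * r) = φ c * r)
    (c : ℂ) (q : NC 2) :
    MonoidAlgebra.ofCoeff (Finsupp.mapRange ⇑φ (map_zero φ) (c • cplx q).coeff) = φ c • q := by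
  have H : ∀ c : ℂ, MonoidAlgebra.ofCoeff (Finsupp.mapRange ⇑φ (map_zero φ) (c • cplx q).coeff) = φ c • q := by
    refine MonoidAlgebra.induction_on
      (motive := fun q => ∀ c : ℂ, MonoidAlgebra.ofCoeff (Finsupp.mapRange ⇑φ (map_zero φ) (c • cplx q).coeff) = φ c • q)
      q (fun w c => ?_) (fun p q hp hq c => ?_) (fun r p hp c => ?_)
    · rw [show (MonoidAlgebra.of ℝ (FreeMonoid (Var 2))) w = MonoidAlgebra.single w (1:ℝ) from rfl,
        cplx_single]
      rw [show (c • MonoidAlgebra.single w ((1:ℝ):ℂ) : NCC) = MonoidAlgebra.single w (c * 1) from by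
        simp [MonoidAlgebra.smul_single]]
      rw [MonoidAlgebra.coeff_single, Finsupp.mapRange_single]
      rw [show (φ c • MonoidAlgebra.single w (1:ℝ) : NC 2) = MonoidAlgebra.single w (φ c • 1) from
        MonoidAlgebra.smul_single _ _ _]
      simp [MonoidAlgebra.ofCoeff_single]
    · rw [map_add, smul_add, MonoidAlgebra.coeff_add, Finsupp.mapRange_add (map_add φ),
        MonoidAlgebra.ofCoeff_add, hp c, hq c, smul_add]
    · rw [cplx_smul, smul_smul, hp (c * r), hφ, smul_smul]
  exact H c

lemma D_part (φ : ℂ →+ ℝ) (hφ : ∀ (c : ℂ) (r : ℝ), φ (c * r) = φ c * r)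
    (i : Fin 2) (p : NCC) :
    D 2 i (MonoidAlgebra.ofCoeff (Finsupp.mapRange ⇑φ (map_zero φ) p.coeff)) =
      MonoidAlgebra.ofCoeff (Finsupp.mapRange ⇑φ (map_zero φ) (DC i p).coeff) := by
  unfold D DC
  rw [MonoidAlgebra.coeff_ofCoeff, Finsupp.sum_mapRange_index (fun w => by simp)]
  rw [MonoidAlgebra.coeff_finsuppSum,
    show Finsupp.mapRange ⇑φ (map_zero φ) = ⇑(Finsupp.mapRange.addMonoidHom φ) from rfl,
    map_finsuppSum, MonoidAlgebra.ofCoeff_finsuppSum]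
  apply Finsupp.sum_congr
  intro w _
  show φ (p.coeff w) • wordD 2 i (FreeMonoid.toList w)
      = MonoidAlgebra.ofCoeff (Finsupp.mapRange ⇑φ (map_zero φ)
          (p.coeff w • wordDC i (FreeMonoid.toList w)).coeff)
  rw [wordDC_eq_cplx, part_smul_cplx φ hφ]

lemma lap_part (φ : ℂ →+ ℝ) (hφ : ∀ (c : ℂ) (r : ℝ), φ (c * r) = φ c * r) (d : ℕ) :
    Lap 2 (MonoidAlgebra.ofCoeff (Finsupp.mapRange ⇑φ (map_zero φ) (gam ^ d).coeff)) = 0 := by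
  unfold Lap
  rw [Fin.sum_univ_two, D_part φ hφ, D_part φ hφ, D_part φ hφ, D_part φ hφ,
    ← MonoidAlgebra.ofCoeff_add, ← Finsupp.mapRange_add (map_add φ), ← MonoidAlgebra.coeff_add,
    lapC_pow d, MonoidAlgebra.coeff_zero, Finsupp.mapRange_zero, MonoidAlgebra.ofCoeff_zero]


/-- `Re(γ^d)` and `Im(γ^d)` are harmonic. -/
theorem harmonic_gamma_pow (d : ℕ) (hd : 1 ≤ d) :
    Lap 2 (rePart (gam ^ d)) = 0 ∧ Lap 2 (imPart (gam ^ d)) = 0 := by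
  constructor
  · exact lap_part Complex.reAddGroupHom (fun c r => by simp) d
  · exact lap_part Complex.imAddGroupHom (fun c r => by simp) d
end
end

section
/- The space of harmonic noncommutative polynomials homogeneous of degree 3 in two variables x_1, x_2 is exactly the two-dimensional real span of x_2^3 − x_1^2·x_2 − x_2·x_1^2 − x_1·x_2·x_1 and −x_1^3 + x_1·x_2^2 + x_2^2·x_1 + x_2·x_1·x_2. -/
noncomputable section

lemma mono_eq_single (g : ℕ) (w : List (Var g)) :
    mono g w = MonoidAlgebra.single (FreeMonoid.ofList w) (1:ℝ) := by
  simp [mono, MonoidAlgebra.of_apply]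

lemma mono_mul (g : ℕ) (u v : List (Var g)) : mono g u * mono g v = mono g (u ++ v) := by
  simp [mono, ← map_mul]

lemma single_eq_smul_mono (g : ℕ) (w : List (Var g)) (c : ℝ) :
    MonoidAlgebra.single (FreeMonoid.ofList w) c = c • mono g w := by
  rw [mono_eq_single]; simp

lemma D_single (g : ℕ) (i : Fin g) (w : FreeMonoid (Var g)) (c : ℝ) :
    D g i (MonoidAlgebra.single w c) = c • wordD g i (FreeMonoid.toList w) := by
  simp [D, MonoidAlgebra.coeff_single, Finsupp.sum_single_index]

lemma D_mono (g : ℕ) (i : Fin g) (w : List (Var g)) : D g i (mono g w) = wordD g i w := by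
  rw [mono_eq_single, D_single]; simp

lemma D_add (g : ℕ) (i : Fin g) (p q : NC g) : D g i (p + q) = D g i p + D g i q := by
  simp only [D, MonoidAlgebra.coeff_add]
  exact Finsupp.sum_add_index' (by simp) (by intros; rw [add_smul])

lemma D_smul (g : ℕ) (i : Fin g) (c : ℝ) (p : NC g) : D g i (c • p) = c • D g i p := by
  simp only [D, MonoidAlgebra.coeff_smul]
  rw [Finsupp.sum_smul_index' (by simp), Finsupp.smul_sum]
  simp [mul_smul]

lemma D_zero (g : ℕ) (i : Fin g) : D g i 0 = 0 := by simp [D]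

lemma D_neg (g : ℕ) (i : Fin g) (p : NC g) : D g i (-p) = - D g i p := by
  have := D_smul g i (-1) p; simpa using this

lemma D_sub (g : ℕ) (i : Fin g) (p q : NC g) : D g i (p - q) = D g i p - D g i q := by
  rw [sub_eq_add_neg, D_add, D_neg, sub_eq_add_neg]

instance instDecEqFM {g : ℕ} : DecidableEq (FreeMonoid (Var g)) :=
  inferInstanceAs (DecidableEq (List (Var g)))

lemma NC_add_apply {g : ℕ} (p q : NC g) (v : FreeMonoid (Var g)) : (p + q).coeff v = p.coeff v + q.coeff v :=
  Finsupp.add_apply p.coeff q.coeff v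
lemma NC_sub_apply {g : ℕ} (p q : NC g) (v : FreeMonoid (Var g)) : (p - q).coeff v = p.coeff v - q.coeff v :=
  Finsupp.sub_apply p.coeff q.coeff v
lemma NC_neg_apply {g : ℕ} (p : NC g) (v : FreeMonoid (Var g)) : (-p).coeff v = -(p.coeff v) :=
  Finsupp.neg_apply p.coeff v
lemma NC_smul_apply {g : ℕ} (c : ℝ) (p : NC g) (v : FreeMonoid (Var g)) :
    (c • p).coeff v = c * p.coeff v := rfl
lemma NC_zero_apply {g : ℕ} (v : FreeMonoid (Var g)) : (0 : NC g).coeff v = 0 := rfl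
lemma mono_apply {g : ℕ} (w : List (Var g)) (v : FreeMonoid (Var g)) :
    (mono g w).coeff v = if FreeMonoid.ofList w = v then 1 else 0 := by
  rw [mono_eq_single]; exact Finsupp.single_apply

lemma list_classify (l : List (Var 2)) (h1 : none ∉ l) (h2 : l.length = 3) :
    l = [some 0, some 0, some 0] ∨ l = [some 0, some 0, some 1] ∨
    l = [some 0, some 1, some 0] ∨ l = [some 0, some 1, some 1] ∨
    l = [some 1, some 0, some 0] ∨ l = [some 1, some 0, some 1] ∨
    l = [some 1, some 1, some 0] ∨ l = [some 1, some 1, some 1] := by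
  rcases l with _ | ⟨a, l⟩; · simp at h2
  rcases l with _ | ⟨b, l⟩; · simp at h2
  rcases l with _ | ⟨c, l⟩; · simp at h2
  rcases l with _ | ⟨d, l⟩
  swap
  · simp at h2
  simp only [List.mem_cons, List.not_mem_nil] at h1
  push_neg at h1
  obtain ⟨ha, hb, hc, -⟩ := h1
  rcases a with _ | a; · exact absurd rfl ha
  rcases b with _ | b; · exact absurd rfl hb
  rcases c with _ | c; · exact absurd rfl hc
  fin_cases a <;> fin_cases b <;> fin_cases c <;> simp

lemma decomp (p : NC 2) (hp : HomogX 2 3 p) :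
    p = p.coeff (FreeMonoid.ofList [some 0, some 0, some 0]) • mono 2 [some 0, some 0, some 0]
      + p.coeff (FreeMonoid.ofList [some 0, some 0, some 1]) • mono 2 [some 0, some 0, some 1]
      + p.coeff (FreeMonoid.ofList [some 0, some 1, some 0]) • mono 2 [some 0, some 1, some 0]
      + p.coeff (FreeMonoid.ofList [some 0, some 1, some 1]) • mono 2 [some 0, some 1, some 1]
      + p.coeff (FreeMonoid.ofList [some 1, some 0, some 0]) • mono 2 [some 1, some 0, some 0]
      + p.coeff (FreeMonoid.ofList [some 1, some 0, some 1]) • mono 2 [some 1, some 0, some 1]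
      + p.coeff (FreeMonoid.ofList [some 1, some 1, some 0]) • mono 2 [some 1, some 1, some 0]
      + p.coeff (FreeMonoid.ofList [some 1, some 1, some 1]) • mono 2 [some 1, some 1, some 1] := by
  have hsub : p.coeff.support ⊆
      ({FreeMonoid.ofList [some 0, some 0, some 0], FreeMonoid.ofList [some 0, some 0, some 1],
        FreeMonoid.ofList [some 0, some 1, some 0], FreeMonoid.ofList [some 0, some 1, some 1],
        FreeMonoid.ofList [some 1, some 0, some 0], FreeMonoid.ofList [some 1, some 0, some 1],
        FreeMonoid.ofList [some 1, some 1, some 0], FreeMonoid.ofList [some 1, some 1, some 1]} :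
        Finset (FreeMonoid (Var 2))) := by
    intro w hw
    obtain ⟨h1, h2⟩ := hp w hw
    have hw' : w = FreeMonoid.ofList (FreeMonoid.toList w) := rfl
    rcases list_classify (FreeMonoid.toList w) h1 h2 with h|h|h|h|h|h|h|h <;>
      rw [hw', h] <;> decide
  have hrep : p = ∑ w ∈
      ({FreeMonoid.ofList [some 0, some 0, some 0], FreeMonoid.ofList [some 0, some 0, some 1],
        FreeMonoid.ofList [some 0, some 1, some 0], FreeMonoid.ofList [some 0, some 1, some 1],
        FreeMonoid.ofList [some 1, some 0, some 0], FreeMonoid.ofList [some 1, some 0, some 1],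
        FreeMonoid.ofList [some 1, some 1, some 0], FreeMonoid.ofList [some 1, some 1, some 1]} :
        Finset (FreeMonoid (Var 2))), MonoidAlgebra.single w (p.coeff w) := by
    apply MonoidAlgebra.coeff_injective
    rw [MonoidAlgebra.coeff_sum]
    simp only [MonoidAlgebra.coeff_single]
    conv_lhs => rw [← Finsupp.sum_single p.coeff]
    rw [Finsupp.sum]
    exact Finset.sum_subset hsub (by
      intro x _ hx
      simp [Finsupp.notMem_support_iff.mp hx])
  conv_lhs => rw [hrep]
  rw [show ({FreeMonoid.ofList [some 0, some 0, some 0], FreeMonoid.ofList [some 0, some 0, some 1],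
        FreeMonoid.ofList [some 0, some 1, some 0], FreeMonoid.ofList [some 0, some 1, some 1],
        FreeMonoid.ofList [some 1, some 0, some 0], FreeMonoid.ofList [some 1, some 0, some 1],
        FreeMonoid.ofList [some 1, some 1, some 0], FreeMonoid.ofList [some 1, some 1, some 1]} :
        Finset (FreeMonoid (Var 2))) = _ from rfl]
  rw [Finset.sum_insert (by decide), Finset.sum_insert (by decide),
     Finset.sum_insert (by decide), Finset.sum_insert (by decide),
     Finset.sum_insert (by decide), Finset.sum_insert (by decide),
     Finset.sum_insert (by decide), Finset.sum_singleton]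
  simp only [single_eq_smul_mono]
  abel


/-- the harmonic homogeneous degree-3 polynomials in two variables
are exactly the span of the two listed polynomials. -/
theorem harmonic_deg3_classification (p : NC 2) :
    (HomogX 2 3 p ∧ Lap 2 p = 0) ↔
    ∃ a b : ℝ,
      p = a • (Xv 2 1 ^ 3 - Xv 2 0 ^ 2 * Xv 2 1 - Xv 2 1 * Xv 2 0 ^ 2
                 - Xv 2 0 * Xv 2 1 * Xv 2 0)
        + b • (-(Xv 2 0 ^ 3) + Xv 2 0 * Xv 2 1 ^ 2 + Xv 2 1 ^ 2 * Xv 2 0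
                 + Xv 2 1 * Xv 2 0 * Xv 2 1) := by
  constructor
  · rintro ⟨hp, hL⟩
    have hd := decomp p hp
    rw [hd] at hL
    simp (config := { decide := true }) only [Lap, Fin.sum_univ_two, D_add, D_smul, D_zero, D_neg, D_mono, wordD, mono_mul,
      mul_add, mul_zero, add_zero, zero_add, neg_zero, smul_add, smul_zero, reduceIte,
      List.cons_append, List.nil_append] at hL
    have e1 := DFunLike.congr_fun (congrArg MonoidAlgebra.coeff hL) (FreeMonoid.ofList ([none, none, some 0] : List (Var 2)))
    have e2 := DFunLike.congr_fun (congrArg MonoidAlgebra.coeff hL) (FreeMonoid.ofList ([none, some 0, none] : List (Var 2)))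
    have e3 := DFunLike.congr_fun (congrArg MonoidAlgebra.coeff hL) (FreeMonoid.ofList ([some 0, none, none] : List (Var 2)))
    have e4 := DFunLike.congr_fun (congrArg MonoidAlgebra.coeff hL) (FreeMonoid.ofList ([none, none, some 1] : List (Var 2)))
    have e5 := DFunLike.congr_fun (congrArg MonoidAlgebra.coeff hL) (FreeMonoid.ofList ([none, some 1, none] : List (Var 2)))
    have e6 := DFunLike.congr_fun (congrArg MonoidAlgebra.coeff hL) (FreeMonoid.ofList ([some 1, none, none] : List (Var 2)))
    simp (config := { decide := true }) only [NC_add_apply, NC_smul_apply, mono_apply,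
      NC_zero_apply, mul_zero, mul_one, add_zero, zero_add, if_true, if_false]
      at e1 e2 e3 e4 e5 e6
    refine ⟨p.coeff (FreeMonoid.ofList [some 1, some 1, some 1]),
           -(p.coeff (FreeMonoid.ofList [some 0, some 0, some 0])), ?_⟩
    conv_lhs => rw [hd]
    simp only [Xv, pow_succ, pow_zero, one_mul, mono_mul, List.cons_append, List.nil_append]
    match_scalars <;> linarith [e1, e2, e3, e4, e5, e6]
  · rintro ⟨a, b, rfl⟩
    constructor
    · intro w hw
      have hne := Finsupp.mem_support_iff.mp hw
      by_contra hC
      apply hne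
      have h1 : FreeMonoid.ofList [some 0, some 0, some 0] ≠ w := by
        rintro rfl; exact hC ⟨by decide, by decide⟩
      have h2 : FreeMonoid.ofList [some 0, some 0, some 1] ≠ w := by
        rintro rfl; exact hC ⟨by decide, by decide⟩
      have h3 : FreeMonoid.ofList [some 0, some 1, some 0] ≠ w := by
        rintro rfl; exact hC ⟨by decide, by decide⟩
      have h4 : FreeMonoid.ofList [some 0, some 1, some 1] ≠ w := by
        rintro rfl; exact hC ⟨by decide, by decide⟩
      have h5 : FreeMonoid.ofList [some 1, some 0, some 0] ≠ w := by
        rintro rfl; exact hC ⟨by decide, by decide⟩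
      have h6 : FreeMonoid.ofList [some 1, some 0, some 1] ≠ w := by
        rintro rfl; exact hC ⟨by decide, by decide⟩
      have h7 : FreeMonoid.ofList [some 1, some 1, some 0] ≠ w := by
        rintro rfl; exact hC ⟨by decide, by decide⟩
      have h8 : FreeMonoid.ofList [some 1, some 1, some 1] ≠ w := by
        rintro rfl; exact hC ⟨by decide, by decide⟩
      simp only [Xv, pow_succ, pow_zero, one_mul, mono_mul, List.cons_append, List.nil_append]
      simp only [NC_add_apply, NC_sub_apply, NC_neg_apply, NC_smul_apply, mono_apply,
        if_neg h1, if_neg h2, if_neg h3, if_neg h4, if_neg h5, if_neg h6, if_neg h7, if_neg h8]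
      ring
    · simp (config := { decide := true }) only [Lap, Fin.sum_univ_two, Xv, pow_succ, pow_zero, one_mul, mono_mul,
        sub_eq_add_neg, List.cons_append, List.nil_append, D_add, D_smul, D_neg, D_zero, D_mono,
        wordD, mul_add, mul_zero, mul_neg, add_zero, zero_add, neg_zero, smul_add, smul_zero,
        smul_neg, reduceIte]
      module
end
end
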